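/- For s > 0 and σ > 0, the scale mixture identity ∫₀^∞ (2πtσ²)^{-1/2} exp(−x²/(2tσ²)) · (t^{s−1}e^{−t}/Γ(s)) dt = (2/((2π)^{1/2}Γ(s)σ)) · (|x|/(σ√2))^{s−1/2} K_{s−1/2}(√2|x|/σ) holds for all x ≠ 0. -/

import Mathlib

open MeasureTheory Real Set in
lemma integral_Ioi_comp_div (c : ℝ) (hc : 0 < c) (g : ℝ → ℝ) :
    ∫ t in Set.Ioi (0:ℝ), g t = ∫ t in Set.Ioi (0:ℝ), c / t ^ 2 * g (c / t) := by
  have himg : (fun t : ℝ => c / t) '' Set.Ioi 0 = Set.Ioi 0 := by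
    ext y
    constructor
    · rintro ⟨t, ht, rfl⟩
      exact div_pos hc ht
    · intro hy
      exact ⟨c / y, div_pos hc hy, by field_simp⟩
  have hderiv : ∀ t ∈ Set.Ioi (0:ℝ),
      HasDerivWithinAt (fun t : ℝ => c / t) (-(c / t ^ 2)) (Set.Ioi 0) t := by
    intro t ht
    have : HasDerivAt (fun t : ℝ => c / t) (-(c / t ^ 2)) t := by
      simpa [div_eq_mul_inv, mul_neg] using (hasDerivAt_inv (ne_of_gt ht)).const_mul c
    exact this.hasDerivWithinAt
  have hinj : Set.InjOn (fun t : ℝ => c / t) (Set.Ioi 0) := by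
    intro t1 ht1 t2 ht2 h
    simp only at h
    rw [div_eq_div_iff (ne_of_gt (show (0:ℝ) < t1 from ht1)) (ne_of_gt (show (0:ℝ) < t2 from ht2))] at h
    exact (mul_left_cancel₀ hc.ne' h).symm
  calc ∫ t in Set.Ioi (0:ℝ), g t
      = ∫ t in (fun t : ℝ => c / t) '' Set.Ioi 0, g t := by rw [himg]
    _ = ∫ t in Set.Ioi (0:ℝ), |(-(c / t ^ 2))| • g (c / t) :=
        integral_image_eq_integral_abs_deriv_smul measurableSet_Ioi hderiv hinj g
    _ = ∫ t in Set.Ioi (0:ℝ), c / t ^ 2 * g (c / t) := by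
        refine setIntegral_congr_fun measurableSet_Ioi fun t ht => ?_
        rw [abs_neg, abs_of_nonneg (by positivity), smul_eq_mul]


/-- The modified Bessel function of the second kind `K_ν`, via its integral
representation `K_ν(x) = (1/2)(x/2)^ν ∫₀^∞ t^(−ν−1) exp(−t − x²/(4t)) dt`. -/
noncomputable def besselK (ν x : ℝ) : ℝ :=
  (1/2) * (x/2) ^ ν * ∫ t in Set.Ioi (0:ℝ), t ^ (-ν - 1) * Real.exp (-t - x^2 / (4*t))

/-- One-dimensional Gauss–Laplace transmutation at the level of densities:
mixing a centered Gaussian density of variance `t σ²` against a `Gamma(s,1)`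
density in `t` yields the `GAL_1(σ², 0, s)` density. -/
theorem stmt18 (s σ : ℝ) (hs : 0 < s) (hσ : 0 < σ) (x : ℝ) (hx : x ≠ 0) :
    (∫ t in Set.Ioi (0:ℝ),
        (2 * Real.pi * t * σ^2) ^ (-(1/2) : ℝ) * Real.exp (-x^2 / (2 * t * σ^2))
          * (t ^ (s - 1) * Real.exp (-t) / Real.Gamma s))
      = 2 / ((2 * Real.pi) ^ ((1:ℝ)/2) * Real.Gamma s * σ)
          * (|x| / (σ * Real.sqrt 2)) ^ (s - 1/2)
          * besselK (s - 1/2) (Real.sqrt 2 * |x| / σ) := by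
  have hΓ : 0 < Real.Gamma s := Real.Gamma_pos_of_pos hs
  set c : ℝ := x ^ 2 / (2 * σ ^ 2) with hc_def
  have hc : 0 < c := by positivity
  set I : ℝ := ∫ t in Set.Ioi (0:ℝ), t ^ (s - 3/2) * Real.exp (-t - c / t) with hI_def
  set J : ℝ := ∫ t in Set.Ioi (0:ℝ), t ^ (-(s - 1/2) - 1) * Real.exp (-t - c / t) with hJ_def
  -- LHS = C_L * I
  have hLHS : (∫ t in Set.Ioi (0:ℝ),
        (2 * Real.pi * t * σ^2) ^ (-(1/2) : ℝ) * Real.exp (-x^2 / (2 * t * σ^2))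
          * (t ^ (s - 1) * Real.exp (-t) / Real.Gamma s))
      = (2 * Real.pi) ^ (-(1/2) : ℝ) * σ⁻¹ / Real.Gamma s * I := by
    rw [hI_def, ← MeasureTheory.integral_const_mul]
    refine MeasureTheory.setIntegral_congr_fun measurableSet_Ioi fun t ht => ?_
    have ht0 : (0:ℝ) < t := ht
    have h1 : (2 * Real.pi * t * σ^2) ^ (-(1/2) : ℝ)
        = (2 * Real.pi) ^ (-(1/2) : ℝ) * σ⁻¹ * t ^ (-(1/2) : ℝ) := by
      have e : 2 * Real.pi * t * σ^2 = (2 * Real.pi) * σ^2 * t := by ring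
      rw [e, Real.mul_rpow (by positivity) ht0.le,
        Real.mul_rpow (by positivity) (by positivity)]
      have : (σ ^ 2 : ℝ) ^ (-(1/2) : ℝ) = σ⁻¹ := by
        rw [← Real.rpow_natCast σ 2, ← Real.rpow_mul hσ.le]
        norm_num [Real.rpow_neg_one]
      rw [this]
    have h2 : Real.exp (-x^2 / (2 * t * σ^2)) * Real.exp (-t) = Real.exp (-t - c / t) := by
      rw [← Real.exp_add]
      congr 1
      rw [hc_def]
      field_simp
      ring
    have h3 : t ^ (-(1/2) : ℝ) * t ^ (s - 1) = t ^ (s - 3/2) := by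
      rw [← Real.rpow_add ht0]
      congr 1
      ring
    calc (2 * Real.pi * t * σ^2) ^ (-(1/2) : ℝ) * Real.exp (-x^2 / (2 * t * σ^2))
          * (t ^ (s - 1) * Real.exp (-t) / Real.Gamma s)
        = (2 * Real.pi) ^ (-(1/2) : ℝ) * σ⁻¹ / Real.Gamma s
            * ((t ^ (-(1/2) : ℝ) * t ^ (s - 1))
              * (Real.exp (-x^2 / (2 * t * σ^2)) * Real.exp (-t))) := by
          rw [h1]; ring
      _ = _ := by rw [h2, h3]
  -- I = c^(s-1/2) * J
  have hIJ : I = c ^ (s - 1/2) * J := by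
    rw [hI_def, integral_Ioi_comp_div c hc, hJ_def, ← MeasureTheory.integral_const_mul]
    refine MeasureTheory.setIntegral_congr_fun measurableSet_Ioi fun t ht => ?_
    have ht0 : (0:ℝ) < t := ht
    have e1 : c / (c / t) = t := by field_simp
    have e2 : (c / t) ^ (s - 3/2) = c ^ (s - 3/2) * t ^ (-(s - 3/2)) := by
      rw [Real.div_rpow hc.le ht0.le, Real.rpow_neg ht0.le, div_eq_mul_inv]
    have e3 : c / t ^ 2 = c * t ^ (-2 : ℝ) := by
      rw [Real.rpow_neg ht0.le, ← Real.rpow_natCast t 2]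
      push_cast
      rw [div_eq_mul_inv]
    simp only [e1, e2, e3]
    have e4 : c * t ^ (-2 : ℝ) * (c ^ (s - 3/2) * t ^ (-(s - 3/2)) * Real.exp (-(c/t) - t))
        = (c ^ (1:ℝ) * c ^ (s - 3/2)) * ((t ^ (-2:ℝ) * t ^ (-(s - 3/2))) * Real.exp (-(c/t) - t)) := by
      rw [Real.rpow_one]; ring
    rw [e4, ← Real.rpow_add hc, ← Real.rpow_add ht0]
    have : (1:ℝ) + (s - 3/2) = s - 1/2 := by ring
    rw [this]
    have : (-2:ℝ) + -(s - 3/2) = -(s - 1/2) - 1 := by ring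
    rw [this]
    have : -(c/t) - t = -t - c/t := by ring
    rw [this]
  -- assemble
  rw [hLHS, hIJ, besselK]
  have hzJ : (∫ t in Set.Ioi (0:ℝ), t ^ (-(s - 1/2) - 1)
      * Real.exp (-t - (Real.sqrt 2 * |x| / σ)^2 / (4*t))) = J := by
    rw [hJ_def]
    refine MeasureTheory.setIntegral_congr_fun measurableSet_Ioi fun t ht => ?_
    have : (Real.sqrt 2 * |x| / σ)^2 = 4 * c := by
      rw [div_pow, mul_pow, Real.sq_sqrt (by norm_num : (0:ℝ) ≤ 2), sq_abs, hc_def]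
      field_simp
      ring
    rw [this]
    congr 2
    rw [mul_comm (4:ℝ) t, ← div_div, mul_div_assoc]
    norm_num
  rw [hzJ]
  -- now pure constant identity
  have ha : Real.sqrt 2 * |x| / σ / 2 = |x| / (σ * Real.sqrt 2) := by
    rw [eq_div_iff (by positivity)]
    have h2 : Real.sqrt 2 * Real.sqrt 2 = 2 := Real.mul_self_sqrt (by norm_num)
    field_simp
    linear_combination h2
  rw [ha]
  set a : ℝ := |x| / (σ * Real.sqrt 2) with ha_def
  have ha0 : 0 < a := by
    have : |x| > 0 := abs_pos.mpr hx
    positivity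
  have ha2 : a ^ 2 = c := by
    rw [ha_def, hc_def, div_pow, mul_pow, Real.sq_sqrt (by norm_num : (0:ℝ) ≤ 2), sq_abs]
    ring
  have hcpow : c ^ (s - 1/2) = a ^ (s - 1/2) * a ^ (s - 1/2) := by
    rw [← ha2, ← Real.rpow_natCast a 2, ← Real.rpow_mul ha0.le, ← Real.rpow_add ha0]
    norm_num
    congr 1
    ring
  rw [hcpow]
  have hrp : (2 * Real.pi) ^ (-(1/2) : ℝ) = ((2 * Real.pi) ^ ((1:ℝ)/2))⁻¹ := by
    rw [← Real.rpow_neg (by positivity)]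
  rw [hrp]
  have h2π : (0:ℝ) < (2 * Real.pi) ^ ((1:ℝ)/2) := by positivity
  field_simp
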